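/- For each r > 0 and each input p in W^{1,1}(0,T), there exists a unique solution ξ_r in W^{1,1}(0,T) of the play variational inequality: |p(t) − ξ_r(t)| ≤ r for all t in [0,T], (ξ_r)'(t)(p(t) − ξ_r(t) − z) ≥ 0 for a.e. t and all z in [−r,r], with initial condition p(0) − ξ_r(0) = max{−r, min{p(0), r}}. -/

import Mathlib

open MeasureTheory Set
open scoped ENNReal

/-- `IsPlay T r p ξ ξ'` says that `ξ ∈ W^{1,1}(0,T)` (with a.e. derivative `ξ'`) solves
the play variational inequality with input `p` and memory parameter `r`:
`|p(t) − ξ(t)| ≤ r` on `[0,T]`, `ξ'(t)(p(t) − ξ(t) − z) ≥ 0` for a.e. `t` and all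
`z ∈ [−r,r]`, and `p(0) − ξ(0) = max{−r, min{p(0), r}}`. -/
def IsPlay (T r : ℝ) (p ξ ξ' : ℝ → ℝ) : Prop :=
  IntervalIntegrable ξ' volume 0 T ∧
  (∀ t ∈ Set.Icc 0 T, ξ t = ξ 0 + ∫ s in (0:ℝ)..t, ξ' s) ∧
  (∀ t ∈ Set.Icc 0 T, |p t - ξ t| ≤ r) ∧
  (∀ᵐ t ∂(volume.restrict (Set.Icc 0 T)),
      ∀ z ∈ Set.Icc (-r) r, 0 ≤ ξ' t * (p t - ξ t - z)) ∧
  p 0 - ξ 0 = max (-r) (min (p 0) r)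

set_option maxHeartbeats 1000000


lemma square_identity {g : ℝ → ℝ} {t : ℝ} (ht : 0 ≤ t)
    (hg : IntervalIntegrable g volume 0 t) :
    (∫ u in (0:ℝ)..t, g u)^2
      = 2 * ∫ s in (0:ℝ)..t, g s * ∫ u in (0:ℝ)..(max 0 (min s t)), g u := by
  set μ := volume.restrict (Ioc (0:ℝ) t) with hμ
  have hgi : Integrable g μ := by exact hg.1
  set G : ℝ → ℝ := fun s => ∫ u in (0:ℝ)..(max 0 (min s t)), g u with hG
  have hGs : ∀ s ∈ Ioc (0:ℝ) t, G s = ∫ u in Ioc (0:ℝ) s, g u := by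
    intro s hs
    have h1 : max 0 (min s t) = s := by rw [min_eq_left hs.2, max_eq_right hs.1.le]
    rw [hG]; simp only [h1]
    rw [intervalIntegral.integral_of_le hs.1.le]
  -- G is bounded and continuous
  have hprim : ContinuousOn (fun x => ∫ u in (0:ℝ)..x, g u) (Icc 0 t) := by
    have := intervalIntegral.continuousOn_primitive_interval
      (a := (0:ℝ)) (b := t) (μ := volume) (f := g) ?_
    · simpa [uIcc_of_le ht] using this
    · rw [uIcc_of_le ht, integrableOn_Icc_iff_integrableOn_Ioc]; exact hg.1
  have hclamp : Continuous (fun s : ℝ => max 0 (min s t)) :=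
    continuous_const.max (continuous_id.min continuous_const)
  have hclampmem : ∀ s : ℝ, max 0 (min s t) ∈ Icc (0:ℝ) t := by
    intro s; constructor
    · exact le_max_left _ _
    · exact max_le ht (min_le_right _ _)
  have hGc : Continuous G := hprim.comp_continuous hclamp hclampmem
  have hGbdd : ∃ C, ∀ x, ‖G x‖ ≤ C := by
    obtain ⟨C, hC⟩ := (isCompact_Icc (a := (0:ℝ)) (b := t)).exists_bound_of_continuousOn hprim
    exact ⟨C, fun x => hC _ (hclampmem x)⟩
  have hgG : Integrable (fun s => g s * G s) μ := by
    obtain ⟨C, hC⟩ := hGbdd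
    have := hgi.bdd_mul hGc.aestronglyMeasurable (Filter.Eventually.of_forall hC)
    simpa [mul_comm] using this
  -- the double integral
  set f : ℝ → ℝ → ℝ := fun s u => if u ≤ s then g s * g u else 0 with hf
  have hfint : Integrable (Function.uncurry f) (μ.prod μ) := by
    have h1 : Integrable (fun q : ℝ × ℝ => g q.1 * g q.2) (μ.prod μ) := hgi.mul_prod hgi
    have h2 : MeasurableSet {q : ℝ × ℝ | q.2 ≤ q.1} :=
      measurableSet_le measurable_snd measurable_fst
    have := h1.indicator h2
    apply this.congr
    filter_upwards with q
    rw [Set.indicator_apply]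
    rcases le_or_gt q.2 q.1 with h | h
    · simp [Function.uncurry, hf, h, mem_setOf_eq]
    · simp [Function.uncurry, hf, not_le.2 h, mem_setOf_eq, h.not_ge]
  have hinner1 : ∀ s ∈ Ioc (0:ℝ) t, (∫ u, f s u ∂μ) = g s * G s := by
    intro s hs
    have h0 : ∀ u, f s u = g s * (Iic s).indicator g u := by
      intro u; rw [Set.indicator_apply]
      rcases le_or_gt u s with h | h
      · simp [hf, h, mem_Iic]
      · simp [hf, not_le.2 h, h.not_ge, mem_Iic]
    simp only [h0]
    rw [integral_const_mul, integral_indicator measurableSet_Iic]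
    rw [hμ, Measure.restrict_restrict measurableSet_Iic]
    have : Iic s ∩ Ioc 0 t = Ioc 0 s := by
      ext u; simp only [mem_inter_iff, mem_Iic, mem_Ioc]
      exact ⟨fun ⟨h1, h2, h3⟩ => ⟨h2, h1⟩, fun ⟨h1, h2⟩ => ⟨h2, h1, h2.trans hs.2⟩⟩
    rw [this, hGs s hs]
  have hinner2 : ∀ u ∈ Ioc (0:ℝ) t, (∫ s, f s u ∂μ) = g u * ((∫ x in (0:ℝ)..t, g x) - G u) := by
    intro u hu
    have h0 : ∀ s, f s u = (Ici u).indicator g s * g u := by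
      intro s; rw [Set.indicator_apply]
      rcases le_or_gt u s with h | h
      · simp [hf, h, mem_Ici, mul_comm]
      · simp [hf, not_le.2 h, h.not_ge, mem_Ici]
    simp only [h0]
    rw [integral_mul_const, integral_indicator measurableSet_Ici]
    rw [hμ, Measure.restrict_restrict measurableSet_Ici]
    have h1 : Ici u ∩ Ioc 0 t = Icc u t := by
      ext s; simp only [mem_inter_iff, mem_Ici, mem_Ioc, mem_Icc]
      exact ⟨fun ⟨h1, _, h3⟩ => ⟨h1, h3⟩, fun ⟨h1, h2⟩ => ⟨h1, hu.1.trans_le h1, h2⟩⟩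
    rw [h1, integral_Icc_eq_integral_Ioc]
    have h2 : (∫ x in Ioc u t, g x) = (∫ x in (0:ℝ)..t, g x) - G u := by
      rw [hGs u hu]
      have ha : IntervalIntegrable g volume 0 u := hg.mono_set (by
        rw [uIcc_of_le hu.1.le, uIcc_of_le ht]; exact Icc_subset_Icc le_rfl hu.2)
      have hb : IntervalIntegrable g volume u t := hg.mono_set (by
        rw [uIcc_of_le hu.2, uIcc_of_le ht]; exact Icc_subset_Icc hu.1.le le_rfl)
      have := intervalIntegral.integral_add_adjacent_intervals ha hb
      rw [← intervalIntegral.integral_of_le hu.1.le, ← intervalIntegral.integral_of_le hu.2]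
      linarith
    rw [h2, mul_comm]
  -- put it together
  have hswap := integral_integral_swap hfint
  have hL : (∫ s, ∫ u, f s u ∂μ ∂μ) = ∫ s, g s * G s ∂μ := by
    apply integral_congr_ae
    filter_upwards [ae_restrict_mem measurableSet_Ioc] with s hs
    exact hinner1 s hs
  have hR : (∫ u, ∫ s, f s u ∂μ ∂μ)
      = ∫ u, g u * ((∫ x in (0:ℝ)..t, g x) - G u) ∂μ := by
    apply integral_congr_ae
    filter_upwards [ae_restrict_mem measurableSet_Ioc] with u hu
    exact hinner2 u hu
  have hgt : (∫ x in (0:ℝ)..t, g x) = ∫ x, g x ∂μ := by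
    rw [intervalIntegral.integral_of_le ht]
  have hRR : (∫ u, g u * ((∫ x in (0:ℝ)..t, g x) - G u) ∂μ)
      = (∫ x in (0:ℝ)..t, g x)^2 - ∫ u, g u * G u ∂μ := by
    have : (fun u => g u * ((∫ x in (0:ℝ)..t, g x) - G u))
        = fun u => g u * (∫ x in (0:ℝ)..t, g x) - g u * G u := by
      funext u; ring
    rw [this, integral_sub (hgi.mul_const _) hgG, integral_mul_const, ← hgt, sq]
  have hfinal : (∫ s, g s * G s ∂μ) = (∫ x in (0:ℝ)..t, g x)^2 - ∫ u, g u * G u ∂μ := by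
    have h := hswap
    rw [hL, hR, hRR] at h
    exact h
  have hIv : (∫ s in (0:ℝ)..t, g s * G s) = ∫ s, g s * G s ∂μ := by
    rw [intervalIntegral.integral_of_le ht]
  rw [hIv]
  linarith


lemma clamp_mono {a b : ℝ} : Monotone (fun x : ℝ => max a (min b x)) :=
  fun _ _ h => max_le_max le_rfl (min_le_min le_rfl h)

lemma clamp_mem {a b : ℝ} (hab : a ≤ b) (x : ℝ) : max a (min b x) ∈ Icc a b :=
  ⟨le_max_left _ _, max_le hab (min_le_left _ _)⟩

lemma clamp_cont {a b : ℝ} : Continuous (fun x : ℝ => max a (min b x)) :=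
  continuous_const.max (continuous_const.min continuous_id)

lemma clamp_eq {a b x : ℝ} (hx : x ∈ Icc a b) : max a (min b x) = x := by
  rw [min_eq_right hx.2, max_eq_right hx.1]

lemma clamp_Ioc {a b s t : ℝ} :
    Ioc a b ∩ Ioc s t = Ioc (max a (min b s)) (max a (min b t)) := by
  rw [Ioc_inter_Ioc]
  ext x
  simp only [mem_Ioc, sup_lt_iff, lt_sup_iff, le_inf_iff, inf_lt_iff, le_sup_iff]
  constructor
  · rintro ⟨⟨hax, hsx⟩, hxb, hxt⟩
    exact ⟨⟨hax, Or.inr hsx⟩, Or.inr ⟨hxb, hxt⟩⟩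
  · rintro ⟨⟨hax, hbs⟩, hx⟩
    rcases hx with hxa | ⟨hxb, hxt⟩
    · exact absurd (hax.trans_le hxa) (lt_irrefl a)
    · rcases hbs with hbx | hsx
      · exact absurd (hbx.trans_le hxb) (lt_irrefl b)
      · exact ⟨⟨hax, hsx⟩, hxb, hxt⟩

/-- FTC for continuous monotone functions dominated by an integral. -/
lemma monotone_piece {f m : ℝ → ℝ} {a b : ℝ} (hab : a ≤ b)
    (hmono : MonotoneOn f (Icc a b)) (hfc : ContinuousOn f (Icc a b))
    (hm0 : ∀ x, 0 ≤ m x) (hmmeas : Measurable m)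
    (hmint : IntegrableOn m (Icc a b) volume)
    (hdom : ∀ s t, a ≤ s → s ≤ t → t ≤ b → f t - f s ≤ ∫ u in s..t, m u) :
    ∃ g : ℝ → ℝ, IntegrableOn g (Icc a b) volume ∧
      (∀ t ∈ Icc a b, f t = f a + ∫ u in a..t, g u) ∧
      (∀ᵐ t ∂volume, t ∈ Ioo a b → HasDerivAt f (g t) t) := by
  set c : ℝ → ℝ := fun x => max a (min b x) with hc
  have hcmem : ∀ x, c x ∈ Icc a b := clamp_mem hab
  have hmsub : ∀ s t : ℝ, a ≤ s → s ≤ t → t ≤ b → IntervalIntegrable m volume s t := by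
    intro s t hs hst htb
    have hsub : uIcc s t ⊆ Icc a b := by
      rw [uIcc_of_le hst]; exact Icc_subset_Icc hs htb
    exact (hmint.mono_set hsub).intervalIntegrable
  set φ : ℝ → ℝ := fun x => f (c x) with hφ
  set ψ : ℝ → ℝ := fun x => ∫ u in a..(c x), m u with hψ
  have hφmono : Monotone φ := fun x y h => hmono (hcmem x) (hcmem y) (clamp_mono h)
  have hφcont : Continuous φ := hfc.comp_continuous clamp_cont hcmem
  have hψdiff : ∀ x y : ℝ, x ≤ y → ψ y - ψ x = ∫ u in (c x)..(c y), m u := by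
    intro x y h
    have h1 := intervalIntegral.integral_add_adjacent_intervals
      (hmsub a (c x) le_rfl (hcmem x).1 (hcmem x).2)
      (hmsub (c x) (c y) (hcmem x).1 (clamp_mono h) (hcmem y).2)
    rw [hψ]; simp only
    linarith
  have hψmono : Monotone ψ := by
    intro x y h
    have h2 : 0 ≤ ∫ u in (c x)..(c y), m u :=
      intervalIntegral.integral_nonneg (clamp_mono h) (fun u _ => hm0 u)
    have := hψdiff x y h
    linarith
  have hψcont : Continuous ψ := by
    have hpr : ContinuousOn (fun x => ∫ u in a..x, m u) (Icc a b) := by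
      have := intervalIntegral.continuousOn_primitive_interval
        (a := a) (b := b) (μ := volume) (f := m) ?_
      · simpa [uIcc_of_le hab] using this
      · rw [uIcc_of_le hab]; exact hmint
    exact hpr.comp_continuous clamp_cont hcmem
  have hwmono : Monotone (fun x => ψ x - φ x) := by
    intro x y h
    have h1 := hψdiff x y h
    have h2 : φ y - φ x ≤ ∫ u in (c x)..(c y), m u :=
      hdom (c x) (c y) (hcmem x).1 (clamp_mono h) (hcmem y).2
    simp only
    linarith
  set S : StieltjesFunction ℝ := ⟨φ, hφmono, fun x => hφcont.continuousWithinAt⟩ with hS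
  set W : StieltjesFunction ℝ :=
    ⟨fun x => ψ x - φ x, hwmono, fun x => ((hψcont.sub hφcont).continuousWithinAt)⟩ with hW
  set Ψ : StieltjesFunction ℝ := ⟨ψ, hψmono, fun x => hψcont.continuousWithinAt⟩ with hΨ
  set M : ℝ → ℝ≥0∞ := fun u => ENNReal.ofReal ((Icc a b).indicator m u) with hM
  have hMmeas : Measurable M := (hmmeas.indicator measurableSet_Icc).ennreal_ofReal
  have hindint : Integrable ((Icc a b).indicator m) volume :=
    hmint.integrable_indicator measurableSet_Icc
  have hκ : Ψ.measure = volume.withDensity M := by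
    refine Measure.ext_of_Ioc _ _ (fun s t hst => ?_)
    rw [StieltjesFunction.measure_Ioc, withDensity_apply _ measurableSet_Ioc]
    have h1 : ∫⁻ u in Ioc s t, M u
        = ENNReal.ofReal (∫ u in Ioc s t, (Icc a b).indicator m u) := by
      rw [ofReal_integral_eq_lintegral_ofReal (hindint.integrableOn)
        (Filter.Eventually.of_forall fun u => indicator_nonneg (fun x _ => hm0 x) u)]
    rw [h1]
    congr 1
    rw [integral_indicator measurableSet_Icc, Measure.restrict_restrict measurableSet_Icc]
    have h2 : ψ t - ψ s = ∫ u in (c s)..(c t), m u := hψdiff s t hst.le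
    have hΨts : Ψ t - Ψ s = ψ t - ψ s := rfl
    rw [hΨts, h2, intervalIntegral.integral_of_le (clamp_mono hst.le)]
    have hae : (Icc a b ∩ Ioc s t : Set ℝ) =ᵐ[volume] (Ioc (c s) (c t) : Set ℝ) := by
      have h3 : (Icc a b ∩ Ioc s t : Set ℝ) =ᵐ[volume] (Ioc a b ∩ Ioc s t : Set ℝ) :=
        (Ioc_ae_eq_Icc (μ := volume) (a := a) (b := b)).symm.inter
          (Filter.EventuallyEq.refl _ _)
      refine h3.trans ?_
      rw [clamp_Ioc]
      exact Filter.EventuallyEq.rfl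
    rw [setIntegral_congr_set hae]
  have hsum : Ψ.measure = S.measure + W.measure := by
    refine Measure.ext_of_Ioc _ _ (fun s t hst => ?_)
    rw [Measure.add_apply]
    rw [StieltjesFunction.measure_Ioc, StieltjesFunction.measure_Ioc,
      StieltjesFunction.measure_Ioc]
    have h1 : (0:ℝ) ≤ φ t - φ s := sub_nonneg.2 (hφmono hst.le)
    have h2 : (0:ℝ) ≤ (ψ t - φ t) - (ψ s - φ s) := sub_nonneg.2 (hwmono hst.le)
    have h3 : (Ψ t : ℝ) - Ψ s = (φ t - φ s) + ((ψ t - φ t) - (ψ s - φ s)) := by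
      show ψ t - ψ s = _
      ring
    rw [h3, ENNReal.ofReal_add h1 h2]
  have hSle : S.measure ≤ volume.withDensity M := by
    rw [← hκ, hsum]
    exact Measure.le_add_right le_rfl
  have hSac : S.measure ≪ volume :=
    (Measure.absolutelyContinuous_of_le hSle).trans (withDensity_absolutelyContinuous _ _)
  set g : ℝ → ℝ := fun x => (S.measure.rnDeriv volume x).toReal with hg
  have hwd : volume.withDensity (S.measure.rnDeriv volume) = S.measure :=
    Measure.withDensity_rnDeriv_eq _ _ hSac
  have hglt : ∀ᵐ x ∂(volume : Measure ℝ), S.measure.rnDeriv volume x < ⊤ :=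
    Measure.rnDeriv_lt_top _ _
  -- integrability of g on [a, b]
  have hgint : IntegrableOn g (Icc a b) volume := by
    apply integrable_toReal_of_lintegral_ne_top
      ((Measure.measurable_rnDeriv _ _).aemeasurable)
    have : ∫⁻ x in Icc a b, S.measure.rnDeriv volume x ∂volume = S.measure (Icc a b) := by
      rw [← withDensity_apply _ measurableSet_Icc, hwd]
    rw [this]
    exact (IsCompact.measure_lt_top isCompact_Icc).ne
  refine ⟨g, hgint, ?_, ?_⟩
  · intro t ht
    have h1 : S.measure (Ioc a t) = ENNReal.ofReal (φ t - φ a) :=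
      StieltjesFunction.measure_Ioc _ _ _
    have h2 : S.measure (Ioc a t) = ∫⁻ x in Ioc a t, S.measure.rnDeriv volume x ∂volume := by
      rw [← withDensity_apply _ measurableSet_Ioc, hwd]
    have h3 : ∫ x in Ioc a t, g x ∂volume
        = (∫⁻ x in Ioc a t, S.measure.rnDeriv volume x ∂volume).toReal := by
      apply integral_toReal ((Measure.measurable_rnDeriv _ _).aemeasurable.restrict)
      exact ae_restrict_of_ae hglt
    have h4 : φ t - φ a = ∫ x in Ioc a t, g x ∂volume := by
      rw [h3, ← h2, h1, ENNReal.toReal_ofReal (sub_nonneg.2 (hφmono ht.1))]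
    have h5 : φ t = f t := by
      show f (max a (min b t)) = f t
      rw [clamp_eq ht]
    have h6 : φ a = f a := by
      show f (max a (min b a)) = f a
      rw [clamp_eq (left_mem_Icc.2 hab)]
    rw [← h5, ← h6]
    rw [intervalIntegral.integral_of_le ht.1, ← h4]
    ring
  · have hD := S.ae_hasDerivAt
    filter_upwards [hD] with x hx hmem
    have hev : φ =ᶠ[nhds x] f := by
      filter_upwards [Ioo_mem_nhds hmem.1 hmem.2] with y hy
      show f (max a (min b y)) = f y
      rw [clamp_eq (Ioo_subset_Icc_self hy)]
    exact (hx.congr_of_eventuallyEq hev.symm)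


noncomputable def II (p : ℝ → ℝ) (s t : ℝ) : ℝ := sInf (p '' Icc s t)
noncomputable def KK (r : ℝ) (p : ℝ → ℝ) (s t : ℝ) : ℝ := min (p s - r) (II p s t + r)
noncomputable def xiF (T r : ℝ) (p : ℝ → ℝ) (x0 : ℝ) (t : ℝ) : ℝ :=
  max (min x0 (II p 0 t + r)) (sSup ((fun s => KK r p s t) '' Icc 0 t))

section Formula

variable {T r : ℝ} {p : ℝ → ℝ} {x0 : ℝ}

lemma bddBelow_img (hpc : ContinuousOn p (Icc 0 T)) {s t : ℝ}
    (hsub : Icc s t ⊆ Icc 0 T) : BddBelow (p '' Icc s t) :=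
  ((isCompact_Icc.image_of_continuousOn hpc).bddBelow).mono (image_mono hsub)

lemma bddAbove_img (hpc : ContinuousOn p (Icc 0 T)) {s t : ℝ}
    (hsub : Icc s t ⊆ Icc 0 T) : BddAbove (p '' Icc s t) :=
  ((isCompact_Icc.image_of_continuousOn hpc).bddAbove).mono (image_mono hsub)

lemma II_le (hpc : ContinuousOn p (Icc 0 T)) {s t u : ℝ}
    (hsub : Icc s t ⊆ Icc 0 T) (hu : u ∈ Icc s t) : II p s t ≤ p u :=
  csInf_le (bddBelow_img hpc hsub) (mem_image_of_mem _ hu)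

lemma le_II {s t y : ℝ} (hst : s ≤ t) (h : ∀ u ∈ Icc s t, y ≤ p u) : y ≤ II p s t :=
  le_csInf ((nonempty_Icc.2 hst).image _) (by rintro _ ⟨u, hu, rfl⟩; exact h u hu)

lemma le_sSup_img (hpc : ContinuousOn p (Icc 0 T)) {s t u : ℝ}
    (hsub : Icc s t ⊆ Icc 0 T) (hu : u ∈ Icc s t) : p u ≤ sSup (p '' Icc s t) :=
  le_csSup (bddAbove_img hpc hsub) (mem_image_of_mem _ hu)

lemma sSup_img_le {s t y : ℝ} (hst : s ≤ t) (h : ∀ u ∈ Icc s t, p u ≤ y) :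
    sSup (p '' Icc s t) ≤ y :=
  csSup_le ((nonempty_Icc.2 hst).image _) (by rintro _ ⟨u, hu, rfl⟩; exact h u hu)

lemma II_anti (hpc : ContinuousOn p (Icc 0 T)) {s t s' t' : ℝ}
    (hsub : Icc s t ⊆ Icc 0 T) (h : Icc s' t' ⊆ Icc s t) (hne : s' ≤ t') :
    II p s t ≤ II p s' t' :=
  csInf_le_csInf (bddBelow_img hpc hsub) ((nonempty_Icc.2 hne).image _) (image_mono h)

lemma II_split (hpc : ContinuousOn p (Icc 0 T)) {s t u : ℝ}
    (hsub : Icc s t ⊆ Icc 0 T) (hsu : s ≤ u) (hut : u ≤ t) :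
    II p s t = min (II p s u) (II p u t) := by
  unfold II
  rw [← Icc_union_Icc_eq_Icc hsu hut, image_union]
  rw [csInf_union (bddBelow_img hpc (fun x hx => hsub ⟨hx.1, hx.2.trans hut⟩))
    ((nonempty_Icc.2 hsu).image _)
    (bddBelow_img hpc (fun x hx => hsub ⟨hsu.trans hx.1, hx.2⟩))
    ((nonempty_Icc.2 hut).image _)]

lemma KK_le_xiF (hpc : ContinuousOn p (Icc 0 T)) {s t : ℝ}
    (hsub : Icc 0 t ⊆ Icc 0 T) (hs : s ∈ Icc 0 t) : KK r p s t ≤ xiF T r p x0 t := by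
  refine le_trans (le_csSup ?_ (mem_image_of_mem (fun u => KK r p u t) hs)) (le_max_right _ _)
  obtain ⟨C, hC⟩ := bddAbove_img hpc hsub
  refine ⟨C - r, ?_⟩
  rintro _ ⟨u, hu, rfl⟩
  calc KK r p u t ≤ p u - r := min_le_left _ _
    _ ≤ C - r := by
        have := hC (mem_image_of_mem p hu)
        linarith

lemma xiF_le {t y : ℝ} (ht : 0 ≤ t) (h1 : min x0 (II p 0 t + r) ≤ y)
    (h2 : ∀ s ∈ Icc 0 t, KK r p s t ≤ y) : xiF T r p x0 t ≤ y := by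
  refine max_le h1 (csSup_le ((nonempty_Icc.2 ht).image _) ?_)
  rintro _ ⟨u, hu, rfl⟩; exact h2 u hu

/-- Lower constraint: `p t - r ≤ ξ t`. -/
lemma xiF_ge_lower (hpc : ContinuousOn p (Icc 0 T)) (hr : 0 < r) {t : ℝ}
    (ht : t ∈ Icc 0 T) : p t - r ≤ xiF T r p x0 t := by
  have h1 : KK r p t t ≤ xiF T r p x0 t :=
    KK_le_xiF hpc (Icc_subset_Icc le_rfl ht.2) (right_mem_Icc.2 ht.1)
  have h2 : II p t t = p t := by unfold II; rw [Icc_self, image_singleton, csInf_singleton]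
  have h3 : KK r p t t = p t - r := by
    unfold KK; rw [h2]; exact min_eq_left (by linarith)
  linarith

/-- Upper constraint: `ξ t ≤ p t + r`. -/
lemma xiF_le_upper (hpc : ContinuousOn p (Icc 0 T)) {t : ℝ}
    (ht : t ∈ Icc 0 T) : xiF T r p x0 t ≤ p t + r := by
  apply xiF_le ht.1
  · have : II p 0 t ≤ p t := II_le hpc (Icc_subset_Icc le_rfl ht.2) (right_mem_Icc.2 ht.1)
    calc min x0 (II p 0 t + r) ≤ II p 0 t + r := min_le_right _ _
      _ ≤ p t + r := by linarith
  · intro s hs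
    have : II p s t ≤ p t :=
      II_le hpc (fun x hx => ⟨hs.1.trans hx.1, hx.2.trans ht.2⟩) (right_mem_Icc.2 hs.2)
    calc KK r p s t ≤ II p s t + r := min_le_right _ _
      _ ≤ p t + r := by linarith

/-- Initial value. -/
lemma xiF_zero (hpc : ContinuousOn p (Icc 0 T)) (hT : 0 ≤ T) (hr : 0 < r)
    (hx0l : p 0 - r ≤ x0) (hx0r : x0 ≤ p 0 + r) : xiF T r p x0 0 = x0 := by
  have h2 : II p 0 0 = p 0 := by unfold II; rw [Icc_self, image_singleton, csInf_singleton]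
  unfold xiF
  rw [Icc_self, image_singleton, csSup_singleton]
  unfold KK
  rw [h2]
  rw [min_eq_left (by linarith : p 0 - r ≤ p 0 + r), min_eq_left (by linarith : x0 ≤ p 0 + r)]
  exact max_eq_left (by linarith)

/-- Key upper evolution estimate. -/
lemma xiF_upper_evol (hpc : ContinuousOn p (Icc 0 T)) {s t : ℝ}
    (hs : 0 ≤ s) (hst : s ≤ t) (ht : t ≤ T) :
    xiF T r p x0 t ≤ max (xiF T r p x0 s) (sSup (p '' Icc s t) - r) := by
  have hsubt : Icc 0 t ⊆ Icc 0 T := Icc_subset_Icc le_rfl ht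
  have hsubs : Icc 0 s ⊆ Icc 0 T := Icc_subset_Icc le_rfl (hst.trans ht)
  apply xiF_le (hs.trans hst)
  · refine le_max_of_le_left ?_
    have h1 : II p 0 t ≤ II p 0 s := II_anti hpc hsubt (Icc_subset_Icc le_rfl hst) hs
    calc min x0 (II p 0 t + r) ≤ min x0 (II p 0 s + r) :=
          min_le_min le_rfl (by linarith)
      _ ≤ xiF T r p x0 s := le_max_left _ _
  · intro u hu
    rcases le_total u s with h | h
    · refine le_max_of_le_left ?_
      have h1 : II p u t ≤ II p u s :=
        II_anti hpc (fun x hx => ⟨hu.1.trans hx.1, hx.2.trans ht⟩)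
          (Icc_subset_Icc le_rfl hst) h
      calc KK r p u t ≤ KK r p u s := min_le_min le_rfl (by linarith)
        _ ≤ xiF T r p x0 s := KK_le_xiF hpc hsubs ⟨hu.1, h⟩
    · refine le_max_of_le_right ?_
      have h1 : p u ≤ sSup (p '' Icc s t) :=
        le_sSup_img hpc (fun x hx => ⟨hs.trans hx.1, hx.2.trans ht⟩) ⟨h, hu.2⟩
      calc KK r p u t ≤ p u - r := min_le_left _ _
        _ ≤ sSup (p '' Icc s t) - r := by linarith

/-- Key lower evolution estimate. -/
lemma xiF_lower_evol (hpc : ContinuousOn p (Icc 0 T)) {s t : ℝ}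
    (hs : 0 ≤ s) (hst : s ≤ t) (ht : t ≤ T) :
    min (xiF T r p x0 s) (II p s t + r) ≤ xiF T r p x0 t := by
  have hsubt : Icc 0 t ⊆ Icc 0 T := Icc_subset_Icc le_rfl ht
  have hsubst : Icc s t ⊆ Icc 0 T := fun x hx => ⟨hs.trans hx.1, hx.2.trans ht⟩
  -- distribute min over the max in xiF s
  have hxis : xiF T r p x0 s
      = max (min x0 (II p 0 s + r)) (sSup ((fun u => KK r p u s) '' Icc 0 s)) := rfl
  rw [min_comm, hxis, min_max_distrib_left]
  apply max_le
  · -- initial part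
    have h1 : II p 0 t = min (II p 0 s) (II p s t) := II_split hpc hsubt hs hst
    have : min (II p s t + r) (min x0 (II p 0 s + r)) = min x0 (II p 0 t + r) := by
      rw [min_left_comm, min_comm (II p s t + r) (II p 0 s + r), min_add_add_right, ← h1]
    rw [this]
    exact le_max_left _ _ |>.trans (le_of_eq rfl)
  · -- sup part: ε-argument
    by_contra hcon
    push_neg at hcon
    set A := sSup ((fun u => KK r p u s) '' Icc 0 s) with hA
    have hne : ((fun u => KK r p u s) '' Icc 0 s).Nonempty := (nonempty_Icc.2 hs).image _
    have h2 : min (II p s t + r) A ≤ A := min_le_right _ _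
    -- find u with KK u s close to A
    rcases le_or_gt A (xiF T r p x0 t) with hAle | hAgt
    · exact absurd (le_trans h2 hAle) (not_le.2 hcon)
    · -- A > xiF t ≥ ... derive contradiction by finding u
      have hlt : xiF T r p x0 t < min (II p s t + r) A := hcon
      have hx1 : xiF T r p x0 t < A := lt_of_lt_of_le hlt (min_le_right _ _)
      have hx2 : xiF T r p x0 t < II p s t + r := lt_of_lt_of_le hlt (min_le_left _ _)
      obtain ⟨y, hy, hxy⟩ := exists_lt_of_lt_csSup hne hx1
      obtain ⟨u, hu, rfl⟩ := hy
      -- KK r p u t ≥ min (KK r p u s) (II p s t + r) > xiF t, contradiction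
      have h3 : II p u t = min (II p u s) (II p s t) :=
        II_split hpc (fun x hx => ⟨hu.1.trans hx.1, hx.2.trans ht⟩) hu.2 hst
      have h4 : min (KK r p u s) (II p s t + r) ≤ KK r p u t := by
        unfold KK
        rw [h3]
        rcases le_total (II p u s) (II p s t) with h | h
        · rw [min_eq_left h]
          rw [min_assoc]
          exact min_le_min le_rfl (by
            rw [min_eq_left (by linarith : II p u s + r ≤ II p s t + r)])
        · rw [min_eq_right h]
          rw [min_assoc]
          refine min_le_min le_rfl ?_
          rw [min_eq_right (by linarith : II p s t + r ≤ II p u s + r)]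
      have h5 : KK r p u t ≤ xiF T r p x0 t :=
        KK_le_xiF hpc hsubt ⟨hu.1, hu.2.trans hst⟩
      have h6 : xiF T r p x0 t < min (KK r p u s) (II p s t + r) :=
        lt_min hxy hx2
      exact absurd (h6.trans_le (h4.trans h5)) (lt_irrefl _)

end Formula

section Est
variable {T r : ℝ} {p p' : ℝ → ℝ} {x0 : ℝ}


lemma hp'sub (hT : 0 ≤ T) (hp' : IntervalIntegrable p' volume 0 T) {s u : ℝ}
    (hs : s ∈ Icc 0 T) (hu : u ∈ Icc 0 T) : IntervalIntegrable p' volume s u := by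
  apply hp'.mono_set
  rw [uIcc_of_le hT]
  intro x hx
  rcases le_total s u with h | h
  · rw [uIcc_of_le h] at hx; exact ⟨hs.1.trans hx.1, hx.2.trans hu.2⟩
  · rw [uIcc_of_ge h] at hx; exact ⟨hu.1.trans hx.1, hx.2.trans hs.2⟩

lemma pdiff (hT : 0 ≤ T) (hp' : IntervalIntegrable p' volume 0 T)
    (hp : ∀ t ∈ Icc 0 T, p t = p 0 + ∫ s in (0:ℝ)..t, p' s) {s u : ℝ}
    (hs : s ∈ Icc 0 T) (hu : u ∈ Icc 0 T) : p u - p s = ∫ x in s..u, p' x := by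
  rw [hp u hu, hp s hs]
  have h0T : (0:ℝ) ∈ Icc 0 T := left_mem_Icc.2 hT
  rw [← intervalIntegral.integral_interval_sub_left (hp'sub hT hp' h0T hu)
    (hp'sub hT hp' h0T hs)]
  ring

lemma posc (hT : 0 ≤ T) (hp' : IntervalIntegrable p' volume 0 T)
    (hp : ∀ t ∈ Icc 0 T, p t = p 0 + ∫ s in (0:ℝ)..t, p' s) {s u t : ℝ}
    (hs : 0 ≤ s) (hsu : s ≤ u) (hut : u ≤ t) (ht : t ≤ T) :
    |p u - p s| ≤ ∫ x in s..t, |p' x| := by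
  have hsT : s ∈ Icc 0 T := ⟨hs, (hsu.trans hut).trans ht⟩
  have huT : u ∈ Icc 0 T := ⟨hs.trans hsu, hut.trans ht⟩
  rw [pdiff hT hp' hp hsT huT]
  calc |∫ x in s..u, p' x| ≤ ∫ x in s..u, |p' x| :=
        intervalIntegral.abs_integral_le_integral_abs hsu
    _ ≤ ∫ x in s..t, |p' x| := by
        have h1 := intervalIntegral.integral_add_adjacent_intervals
          ((hp'sub hT hp' hsT huT).abs) ((hp'sub hT hp' huT ⟨hs.trans (hsu.trans hut), ht⟩).abs)
        have h2 : 0 ≤ ∫ x in u..t, |p' x| :=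
          intervalIntegral.integral_nonneg hut (fun x _ => abs_nonneg _)
        linarith

/-- The basic oscillation estimate for the formula. -/
lemma xiF_osc (hT : 0 ≤ T) (hr : 0 < r) (hpc : ContinuousOn p (Icc 0 T))
    (hp' : IntervalIntegrable p' volume 0 T)
    (hp : ∀ t ∈ Icc 0 T, p t = p 0 + ∫ s in (0:ℝ)..t, p' s) {s t : ℝ}
    (hs : 0 ≤ s) (hst : s ≤ t) (ht : t ≤ T) :
    |xiF T r p x0 t - xiF T r p x0 s| ≤ ∫ x in s..t, |p' x| := by
  set V := ∫ x in s..t, |p' x| with hV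
  have hV0 : 0 ≤ V := intervalIntegral.integral_nonneg hst (fun x _ => abs_nonneg _)
  have hsT : s ∈ Icc 0 T := ⟨hs, hst.trans ht⟩
  have htT : t ∈ Icc 0 T := ⟨hs.trans hst, ht⟩
  have hup : xiF T r p x0 t - xiF T r p x0 s ≤ V := by
    have h1 := xiF_upper_evol (x0 := x0) (r := r) hpc hs hst ht
    have h2 : sSup (p '' Icc s t) ≤ p s + V := by
      apply sSup_img_le hst
      intro u hu
      have := posc hT hp' hp hs hu.1 hu.2 ht
      have := abs_le.1 this
      linarith [this.2]
    have h3 : p s - r ≤ xiF T r p x0 s := xiF_ge_lower hpc hr hsT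
    have h4 : max (xiF T r p x0 s) (sSup (p '' Icc s t) - r) ≤ xiF T r p x0 s + V :=
      max_le (by linarith) (by linarith)
    linarith
  have hdown : xiF T r p x0 s - xiF T r p x0 t ≤ V := by
    have h1 := xiF_lower_evol (x0 := x0) (r := r) hpc hs hst ht
    have h2 : p s - V ≤ II p s t := by
      apply le_II hst
      intro u hu
      have := posc hT hp' hp hs hu.1 hu.2 ht
      have := abs_le.1 this
      linarith [this.1]
    have h3 : xiF T r p x0 s ≤ p s + r := xiF_le_upper hpc hsT
    have h4 : xiF T r p x0 s - V ≤ min (xiF T r p x0 s) (II p s t + r) :=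
      le_min (by linarith) (by linarith)
    linarith
  rw [abs_le]
  constructor <;> linarith

/-- Continuity of `xiF` on `[0,T]`. -/
lemma xiF_cont (hT : 0 ≤ T) (hr : 0 < r) (hpc : ContinuousOn p (Icc 0 T))
    (hp' : IntervalIntegrable p' volume 0 T)
    (hp : ∀ t ∈ Icc 0 T, p t = p 0 + ∫ s in (0:ℝ)..t, p' s) :
    ContinuousOn (xiF T r p x0) (Icc 0 T) := by
  set A : ℝ → ℝ := fun t => ∫ x in (0:ℝ)..t, |p' x| with hA
  have hAc : ContinuousOn A (Icc 0 T) := by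
    have := intervalIntegral.continuousOn_primitive_interval
      (a := (0:ℝ)) (b := T) (μ := volume) (f := fun x => |p' x|) ?_
    · simpa [uIcc_of_le hT] using this
    · rw [uIcc_of_le hT, integrableOn_Icc_iff_integrableOn_Ioc]
      exact hp'.abs.1
  intro t0 ht0
  have hAct : ContinuousWithinAt A (Icc 0 T) t0 := hAc t0 ht0
  rw [Metric.continuousWithinAt_iff] at hAct ⊢
  intro ε hε
  obtain ⟨δ, hδ, hδ2⟩ := hAct ε hε
  refine ⟨δ, hδ, fun u hu hud => ?_⟩
  have key : ∀ a b : ℝ, a ∈ Icc 0 T → b ∈ Icc 0 T → a ≤ b →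
      |xiF T r p x0 b - xiF T r p x0 a| ≤ |A b - A a| := by
    intro a b ha hb hab
    have h1 := xiF_osc (x0 := x0) hT hr hpc hp' hp ha.1 hab hb.2
    have h2 : (∫ x in a..b, |p' x|) = A b - A a := by
      rw [hA]
      have := intervalIntegral.integral_interval_sub_left
        ((hp'sub hT hp' (left_mem_Icc.2 hT) hb).abs)
        ((hp'sub hT hp' (left_mem_Icc.2 hT) ha).abs)
      simp only
      linarith
    rw [h2] at h1
    exact h1.trans (le_abs_self _)
  have hd2 := hδ2 hu hud
  rw [Real.dist_eq] at *
  rcases le_total u t0 with h | h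
  · have := key u t0 hu ht0 h
    rw [abs_sub_comm] at this hd2
    exact lt_of_le_of_lt this hd2
  · exact lt_of_le_of_lt (key t0 u ht0 hu h) hd2

end Est

section Mono
variable {T r : ℝ} {p p' : ℝ → ℝ} {x0 : ℝ}


/-- If strictly inside the upper constraint at `t0`, `xiF` is locally nonincreasing. -/
lemma xiF_loc_noninc (hT : 0 ≤ T) (hr : 0 < r) (hpc : ContinuousOn p (Icc 0 T))
    (hp' : IntervalIntegrable p' volume 0 T)
    (hp : ∀ t ∈ Icc 0 T, p t = p 0 + ∫ s in (0:ℝ)..t, p' s)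
    {t0 : ℝ} (ht0 : t0 ∈ Icc 0 T) (hstrict : p t0 - r < xiF T r p x0 t0) :
    ∃ δ > 0, ∀ s t : ℝ, s ∈ Icc 0 T → t ∈ Icc 0 T →
      t0 - δ ≤ s → s ≤ t → t ≤ t0 + δ → xiF T r p x0 t ≤ xiF T r p x0 s := by
  set ε := xiF T r p x0 t0 - (p t0 - r) with hε
  have hε0 : 0 < ε := by rw [hε]; linarith
  have hpct : ContinuousWithinAt p (Icc 0 T) t0 := hpc t0 ht0
  have hxct : ContinuousWithinAt (xiF T r p x0) (Icc 0 T) t0 :=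
    xiF_cont hT hr hpc hp' hp t0 ht0
  rw [Metric.continuousWithinAt_iff] at hpct hxct
  obtain ⟨δ1, hδ1, h1⟩ := hpct (ε/4) (by linarith)
  obtain ⟨δ2, hδ2, h2⟩ := hxct (ε/4) (by linarith)
  refine ⟨min δ1 δ2 / 2, by positivity, fun s t hsT htT hs hst ht => ?_⟩
  have hwin : ∀ u : ℝ, u ∈ Icc 0 T → t0 - min δ1 δ2 / 2 ≤ u → u ≤ t0 + min δ1 δ2 / 2 →
      |p u - p t0| < ε/4 ∧ |xiF T r p x0 u - xiF T r p x0 t0| < ε/4 := by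
    intro u hu h1u h2u
    have habs : |u - t0| ≤ min δ1 δ2 / 2 := abs_le.2 ⟨by linarith, by linarith⟩
    have hd1 : dist u t0 < δ1 := by
      rw [Real.dist_eq]
      calc |u - t0| ≤ min δ1 δ2 / 2 := habs
        _ < δ1 := by have := min_le_left δ1 δ2; linarith
    have hd2 : dist u t0 < δ2 := by
      rw [Real.dist_eq]
      calc |u - t0| ≤ min δ1 δ2 / 2 := habs
        _ < δ2 := by have := min_le_right δ1 δ2; linarith
    constructor
    · have := h1 hu hd1; rwa [Real.dist_eq] at this
    · have := h2 hu hd2; rwa [Real.dist_eq] at this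
  have hupper := xiF_upper_evol (x0 := x0) (r := r) hpc hsT.1 hst htT.2
  have hsSup : sSup (p '' Icc s t) - r < xiF T r p x0 s := by
    have hsb : sSup (p '' Icc s t) ≤ p t0 + ε/4 := by
      apply sSup_img_le hst
      intro u hu
      have huT : u ∈ Icc 0 T := ⟨hsT.1.trans hu.1, hu.2.trans htT.2⟩
      have := (hwin u huT (by linarith [hu.1]) (by linarith [hu.2])).1
      have := abs_le.1 this.le
      linarith [this.2]
    have hxs : xiF T r p x0 t0 - ε/4 ≤ xiF T r p x0 s := by
      have := (hwin s hsT (by linarith) (by linarith [hst, ht])).2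
      have := abs_le.1 this.le
      linarith [this.1]
    have : p t0 - r = xiF T r p x0 t0 - ε := by rw [hε]; ring
    linarith
  calc xiF T r p x0 t ≤ max (xiF T r p x0 s) (sSup (p '' Icc s t) - r) := hupper
    _ ≤ xiF T r p x0 s := max_le le_rfl hsSup.le

/-- If strictly inside the lower constraint at `t0`, `xiF` is locally nondecreasing. -/
lemma xiF_loc_nondec (hT : 0 ≤ T) (hr : 0 < r) (hpc : ContinuousOn p (Icc 0 T))
    (hp' : IntervalIntegrable p' volume 0 T)
    (hp : ∀ t ∈ Icc 0 T, p t = p 0 + ∫ s in (0:ℝ)..t, p' s)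
    {t0 : ℝ} (ht0 : t0 ∈ Icc 0 T) (hstrict : xiF T r p x0 t0 < p t0 + r) :
    ∃ δ > 0, ∀ s t : ℝ, s ∈ Icc 0 T → t ∈ Icc 0 T →
      t0 - δ ≤ s → s ≤ t → t ≤ t0 + δ → xiF T r p x0 s ≤ xiF T r p x0 t := by
  set ε := p t0 + r - xiF T r p x0 t0 with hε
  have hε0 : 0 < ε := by rw [hε]; linarith
  have hpct : ContinuousWithinAt p (Icc 0 T) t0 := hpc t0 ht0
  have hxct : ContinuousWithinAt (xiF T r p x0) (Icc 0 T) t0 :=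
    xiF_cont hT hr hpc hp' hp t0 ht0
  rw [Metric.continuousWithinAt_iff] at hpct hxct
  obtain ⟨δ1, hδ1, h1⟩ := hpct (ε/4) (by linarith)
  obtain ⟨δ2, hδ2, h2⟩ := hxct (ε/4) (by linarith)
  refine ⟨min δ1 δ2 / 2, by positivity, fun s t hsT htT hs hst ht => ?_⟩
  have hwin : ∀ u : ℝ, u ∈ Icc 0 T → t0 - min δ1 δ2 / 2 ≤ u → u ≤ t0 + min δ1 δ2 / 2 →
      |p u - p t0| < ε/4 ∧ |xiF T r p x0 u - xiF T r p x0 t0| < ε/4 := by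
    intro u hu h1u h2u
    have habs : |u - t0| ≤ min δ1 δ2 / 2 := abs_le.2 ⟨by linarith, by linarith⟩
    have hd1 : dist u t0 < δ1 := by
      rw [Real.dist_eq]
      calc |u - t0| ≤ min δ1 δ2 / 2 := habs
        _ < δ1 := by have := min_le_left δ1 δ2; linarith
    have hd2 : dist u t0 < δ2 := by
      rw [Real.dist_eq]
      calc |u - t0| ≤ min δ1 δ2 / 2 := habs
        _ < δ2 := by have := min_le_right δ1 δ2; linarith
    constructor
    · have := h1 hu hd1; rwa [Real.dist_eq] at this
    · have := h2 hu hd2; rwa [Real.dist_eq] at this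
  have hlower := xiF_lower_evol (x0 := x0) (r := r) hpc hsT.1 hst htT.2
  have hII : xiF T r p x0 s < II p s t + r := by
    have hib : p t0 - ε/4 ≤ II p s t := by
      apply le_II hst
      intro u hu
      have huT : u ∈ Icc 0 T := ⟨hsT.1.trans hu.1, hu.2.trans htT.2⟩
      have := (hwin u huT (by linarith [hu.1]) (by linarith [hu.2])).1
      have := abs_le.1 this.le
      linarith [this.1]
    have hxs : xiF T r p x0 s ≤ xiF T r p x0 t0 + ε/4 := by
      have := (hwin s hsT (by linarith) (by linarith [hst, ht])).2
      have := abs_le.1 this.le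
      linarith [this.2]
    have : p t0 + r = xiF T r p x0 t0 + ε := by rw [hε]; ring
    linarith
  calc xiF T r p x0 s = min (xiF T r p x0 s) (II p s t + r) := (min_eq_left hII.le).symm
    _ ≤ xiF T r p x0 t := hlower

/-- Uniform piecewise-monotonicity radius via the Lebesgue number lemma. -/
lemma xiF_pieces (hT : 0 ≤ T) (hr : 0 < r) (hpc : ContinuousOn p (Icc 0 T))
    (hp' : IntervalIntegrable p' volume 0 T)
    (hp : ∀ t ∈ Icc 0 T, p t = p 0 + ∫ s in (0:ℝ)..t, p' s) :
    ∃ δ > 0, ∀ t0 ∈ Icc 0 T,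
      (∀ s t : ℝ, s ∈ Icc 0 T → t ∈ Icc 0 T → t0 ≤ s → s ≤ t → t ≤ t0 + δ →
        xiF T r p x0 t ≤ xiF T r p x0 s) ∨
      (∀ s t : ℝ, s ∈ Icc 0 T → t ∈ Icc 0 T → t0 ≤ s → s ≤ t → t ≤ t0 + δ →
        xiF T r p x0 s ≤ xiF T r p x0 t) := by
  have hpt : ∀ i ∈ Icc 0 T, ∃ δ, 0 < δ ∧
      ((∀ s t : ℝ, s ∈ Icc 0 T → t ∈ Icc 0 T → i - δ ≤ s → s ≤ t → t ≤ i + δ →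
        xiF T r p x0 t ≤ xiF T r p x0 s) ∨
       (∀ s t : ℝ, s ∈ Icc 0 T → t ∈ Icc 0 T → i - δ ≤ s → s ≤ t → t ≤ i + δ →
        xiF T r p x0 s ≤ xiF T r p x0 t)) := by
    intro i hi
    rcases lt_or_ge (p i - r) (xiF T r p x0 i) with h | h
    · obtain ⟨δ, hδ, hprop⟩ := xiF_loc_noninc (p' := p') hT hr hpc hp' hp hi h
      exact ⟨δ, hδ, Or.inl hprop⟩
    · have h2 : xiF T r p x0 i < p i + r := by linarith
      obtain ⟨δ, hδ, hprop⟩ := xiF_loc_nondec (p' := p') hT hr hpc hp' hp hi h2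
      exact ⟨δ, hδ, Or.inr hprop⟩
  choose! D hD0 hDp using hpt
  set c : ℝ → Set ℝ := fun i => if i ∈ Icc 0 T then Metric.ball i (D i) else ∅ with hc
  have hc1 : ∀ i, IsOpen (c i) := by
    intro i; rw [hc]; simp only; split
    · exact Metric.isOpen_ball
    · exact isOpen_empty
  have hc2 : Icc 0 T ⊆ ⋃ i, c i := by
    intro x hx
    refine mem_iUnion.2 ⟨x, ?_⟩
    rw [hc]; simp only [if_pos hx]
    exact Metric.mem_ball_self (hD0 x hx)
  obtain ⟨δs, hδs, hball⟩ := lebesgue_number_lemma_of_metric isCompact_Icc hc1 hc2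
  refine ⟨δs/2, by positivity, fun t0 ht0 => ?_⟩
  obtain ⟨i, hi⟩ := hball t0 ht0
  have hiT : i ∈ Icc 0 T := by
    by_contra h
    have : t0 ∈ c i := hi (Metric.mem_ball_self hδs)
    rw [hc] at this; simp only [if_neg h] at this
    exact this
  have hcball : c i = Metric.ball i (D i) := by rw [hc]; simp only [if_pos hiT]
  have hwin : ∀ u : ℝ, t0 ≤ u → u ≤ t0 + δs/2 → i - D i ≤ u ∧ u ≤ i + D i := by
    intro u h1 h2
    have : u ∈ Metric.ball t0 δs := by
      rw [Metric.mem_ball, Real.dist_eq]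
      rw [abs_lt]
      constructor <;> linarith
    have := hi this
    rw [hcball, Metric.mem_ball, Real.dist_eq, abs_lt] at this
    constructor <;> linarith [this.1, this.2]
  rcases hDp i hiT with hm | hm
  · left
    intro s t hsT htT h1 h2 h3
    exact hm s t hsT htT (hwin s h1 (by linarith)).1 h2 (hwin t (h1.trans h2) h3).2
  · right
    intro s t hsT htT h1 h2 h3
    exact hm s t hsT htT (hwin s h1 (by linarith)).1 h2 (hwin t (h1.trans h2) h3).2

end Mono

/-- Monotone in either direction on `[a,b]` implies the FTC data there. -/
lemma piece_any {xi m : ℝ → ℝ} {a b : ℝ} (hab : a ≤ b)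
    (hxc : ContinuousOn xi (Icc a b))
    (hm0 : ∀ x, 0 ≤ m x) (hmmeas : Measurable m)
    (hmint : IntegrableOn m (Icc a b) volume)
    (hosc : ∀ s t : ℝ, a ≤ s → s ≤ t → t ≤ b → |xi t - xi s| ≤ ∫ u in s..t, m u)
    (hdir : MonotoneOn xi (Icc a b) ∨ AntitoneOn xi (Icc a b)) :
    ∃ g : ℝ → ℝ, IntegrableOn g (Icc a b) volume ∧
      (∀ t ∈ Icc a b, xi t = xi a + ∫ u in a..t, g u) ∧
      (∀ᵐ t ∂volume, t ∈ Ioo a b → HasDerivAt xi (g t) t) := by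
  rcases hdir with hm | hm
  · exact monotone_piece hab hm hxc hm0 hmmeas hmint
      (fun s t hs hst ht => le_trans (le_abs_self _) (hosc s t hs hst ht))
  · have hneg : MonotoneOn (fun t => -xi t) (Icc a b) := fun s hs t ht hst =>
      neg_le_neg (hm hs ht hst)
    obtain ⟨g, hgint, hgftc, hgae⟩ := monotone_piece hab hneg (hxc.neg) hm0 hmmeas hmint
      (fun s t hs hst ht => by
        have h1 := hosc s t hs hst ht
        have h2 := abs_le.1 h1
        show -xi t - -xi s ≤ _
        linarith [h2.1])
    refine ⟨fun t => -g t, hgint.neg, ?_, ?_⟩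
    · intro t ht
      have := hgftc t ht
      rw [intervalIntegral.integral_neg]
      linarith
    · filter_upwards [hgae] with t ht hmem
      have := (ht hmem).neg
      have hneg2 : (-fun t => -xi t) = xi := by ext; simp
      rwa [hneg2] at this

/-- Gluing local FTC data on pieces to `[0,T]`. -/
lemma glue_pieces {xi m : ℝ → ℝ} {T δ : ℝ} (hT : 0 ≤ T) (hδ : 0 < δ)
    (hxc : ContinuousOn xi (Icc 0 T))
    (hm0 : ∀ x, 0 ≤ m x) (hmmeas : Measurable m)
    (hmint : IntegrableOn m (Icc 0 T) volume)
    (hosc : ∀ s t : ℝ, 0 ≤ s → s ≤ t → t ≤ T → |xi t - xi s| ≤ ∫ u in s..t, m u)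
    (hpieces : ∀ t0 ∈ Icc 0 T,
      (∀ s t : ℝ, s ∈ Icc 0 T → t ∈ Icc 0 T → t0 ≤ s → s ≤ t → t ≤ t0 + δ →
        xi t ≤ xi s) ∨
      (∀ s t : ℝ, s ∈ Icc 0 T → t ∈ Icc 0 T → t0 ≤ s → s ≤ t → t ≤ t0 + δ →
        xi s ≤ xi t)) :
    ∃ g : ℝ → ℝ, IntegrableOn g (Icc 0 T) volume ∧
      (∀ t ∈ Icc 0 T, xi t = xi 0 + ∫ u in (0:ℝ)..t, g u) ∧
      (∀ᵐ t ∂volume, t ∈ Ioo 0 T → HasDerivAt xi (g t) t) := by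
  set P : ℝ → Prop := fun b => ∃ g : ℝ → ℝ, IntegrableOn g (Icc 0 b) volume ∧
      (∀ t ∈ Icc 0 b, xi t = xi 0 + ∫ u in (0:ℝ)..t, g u) ∧
      (∀ᵐ t ∂volume, t ∈ Ioo 0 b → HasDerivAt xi (g t) t) with hP
  have base : P 0 := by
    refine ⟨fun _ => 0, (integrable_zero _ _ _).integrableOn, ?_, ?_⟩
    · intro t ht
      have : t = 0 := le_antisymm ht.2 ht.1
      subst this
      simp
    · filter_upwards with t ht
      simp at ht
  have step : ∀ b : ℝ, 0 ≤ b → b ≤ T → P b → P (min T (b + δ)) := by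
    intro b hb0 hbT hPb
    obtain ⟨g, hgint, hgftc, hgae⟩ := hPb
    set d := min T (b + δ) with hd
    have hd0 : 0 ≤ d := le_min hT (by linarith)
    have hdT : d ≤ T := min_le_left _ _
    rcases le_or_gt d b with h | h
    · -- nothing to do
      refine ⟨g, hgint.mono_set (Icc_subset_Icc le_rfl h), ?_, ?_⟩
      · exact fun t ht => hgftc t ⟨ht.1, ht.2.trans h⟩
      · filter_upwards [hgae] with t ht hmem
        exact ht ⟨hmem.1, lt_of_lt_of_le hmem.2 h⟩
    · -- extend by one piece [b, d]
      have hsubbd : Icc b d ⊆ Icc 0 T := Icc_subset_Icc hb0 hdT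
      have hdbδ : d ≤ b + δ := min_le_right _ _
      have hdir : MonotoneOn xi (Icc b d) ∨ AntitoneOn xi (Icc b d) := by
        rcases hpieces b ⟨hb0, hbT⟩ with hcase | hcase
        · right
          intro s hs t ht hst
          exact hcase s t (hsubbd hs) (hsubbd ht) hs.1 hst (ht.2.trans hdbδ)
        · left
          intro s hs t ht hst
          exact hcase s t (hsubbd hs) (hsubbd ht) hs.1 hst (ht.2.trans hdbδ)
      obtain ⟨gp, hgpint, hgpftc, hgpae⟩ := piece_any h.le (hxc.mono hsubbd) hm0 hmmeas
        (hmint.mono_set hsubbd)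
        (fun s t hs hst ht => hosc s t (hb0.trans hs) hst (ht.trans hdT)) hdir
      set gn : ℝ → ℝ := fun u => if u < b then g u else gp u with hgn
      have hne_b : ∀ᵐ u : ℝ ∂volume, u ≠ b := by
        rw [ae_iff]
        have : {u : ℝ | ¬ u ≠ b} = {b} := by ext u; simp
        rw [this]
        exact measure_singleton b
      have hint0b : IntegrableOn gn (Icc 0 b) volume := by
        apply (hgint.congr_fun_ae _)
        filter_upwards [ae_restrict_of_ae hne_b, ae_restrict_mem measurableSet_Icc]
          with u hu hu2
        rw [hgn]
        simp only [if_pos (lt_of_le_of_ne hu2.2 hu)]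
      have hintbd : IntegrableOn gn (Icc b d) volume := by
        apply (hgpint.congr_fun_ae _)
        filter_upwards [ae_restrict_mem measurableSet_Icc] with u hu
        rw [hgn]
        simp only [if_neg (not_lt.2 hu.1)]
      have hint : IntegrableOn gn (Icc 0 d) volume := by
        have : Icc (0:ℝ) d ⊆ Icc 0 b ∪ Icc b d := by
          intro u hu
          rcases le_or_gt u b with h' | h'
          · exact Or.inl ⟨hu.1, h'⟩
          · exact Or.inr ⟨h'.le, hu.2⟩
        exact (hint0b.union hintbd).mono_set this
      have hii : ∀ s t : ℝ, 0 ≤ s → t ≤ d → s ≤ t → IntervalIntegrable gn volume s t := by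
        intro s t hs ht hst
        apply (hint.mono_set _).intervalIntegrable
        rw [uIcc_of_le hst]
        exact Icc_subset_Icc hs ht
      have hgne : ∀ t ∈ Icc (0:ℝ) b, (∫ u in (0:ℝ)..t, gn u) = ∫ u in (0:ℝ)..t, g u := by
        intro t ht
        apply intervalIntegral.integral_congr_ae
        filter_upwards [hne_b] with u hu humem
        rw [uIoc_of_le ht.1] at humem
        rw [hgn]
        simp only [if_pos (lt_of_le_of_ne (humem.2.trans ht.2) hu)]
      have hftc : ∀ t ∈ Icc (0:ℝ) d, xi t = xi 0 + ∫ u in (0:ℝ)..t, gn u := by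
        intro t ht
        rcases le_or_gt t b with h' | h'
        · rw [hgne t ⟨ht.1, h'⟩]
          exact hgftc t ⟨ht.1, h'⟩
        · have hsplit := intervalIntegral.integral_add_adjacent_intervals
            (hii 0 b le_rfl h.le hb0) (hii b t hb0 ht.2 h'.le)
          have h0b : (∫ u in (0:ℝ)..b, gn u) = xi b - xi 0 := by
            rw [hgne b ⟨hb0, le_rfl⟩]
            have := hgftc b ⟨hb0, le_rfl⟩
            linarith
          have hbt : (∫ u in b..t, gn u) = xi t - xi b := by
            have h1 : (∫ u in b..t, gn u) = ∫ u in b..t, gp u := by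
              apply intervalIntegral.integral_congr_ae
              filter_upwards with u humem
              rw [uIoc_of_le h'.le] at humem
              rw [hgn]
              simp only [if_neg (not_lt.2 humem.1.le)]
            rw [h1]
            have := hgpftc t ⟨h'.le, ht.2⟩
            linarith
          rw [← hsplit, h0b, hbt]
          ring
      refine ⟨gn, hint, hftc, ?_⟩
      filter_upwards [hgae, hgpae, hne_b] with t h1 h2 h3 hmem
      rcases lt_or_gt_of_ne h3 with h' | h'
      · have : HasDerivAt xi (g t) t := h1 ⟨hmem.1, h'⟩
        have hgg : gn t = g t := by rw [hgn]; simp only [if_pos h']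
        rwa [← hgg] at this
      · have : HasDerivAt xi (gp t) t := h2 ⟨h', hmem.2⟩
        have hgg : gn t = gp t := by rw [hgn]; simp only [if_neg (not_lt.2 h'.le)]
        rwa [← hgg] at this
  -- iterate
  have iter : ∀ n : ℕ, P (min T (n * δ)) := by
    intro n
    induction n with
    | zero => simpa [min_eq_right hT] using base
    | succ n ih =>
      have hmem0 : 0 ≤ min T (n * δ) := le_min hT (by positivity)
      have hmemT : min T (n * δ) ≤ T := min_le_left _ _
      have := step _ hmem0 hmemT ih
      have heq : min T (min T (n * δ) + δ) = min T ((n + 1 : ℕ) * δ) := by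
        rcases le_total T (n * δ) with h | h
        · rw [min_eq_left h, min_eq_left (by linarith), min_eq_left]
          push_cast
          nlinarith
        · rw [min_eq_right h]
          congr 1
          push_cast
          ring
      rwa [heq] at this
  obtain ⟨n, hn⟩ := exists_nat_ge (T / δ)
  have hTn : T ≤ n * δ := by
    rw [div_le_iff₀ hδ] at hn
    linarith
  have := iter n
  rwa [min_eq_left hTn] at this


/-- For each `r > 0` and each input `p ∈ W^{1,1}(0,T)`, there exists a solution
`ξ_r ∈ W^{1,1}(0,T)` of the play variational inequality, and it is unique
(as a function on `[0,T]`). -/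
theorem play_exists_unique (T r : ℝ) (hT : 0 < T) (hr : 0 < r)
    (p p' : ℝ → ℝ) (hp' : IntervalIntegrable p' volume 0 T)
    (hp : ∀ t ∈ Set.Icc 0 T, p t = p 0 + ∫ s in (0:ℝ)..t, p' s) :
    ∃ ξ ξ' : ℝ → ℝ, IsPlay T r p ξ ξ' ∧
      ∀ η η' : ℝ → ℝ, IsPlay T r p η η' → Set.EqOn ξ η (Set.Icc 0 T) := by
  have hT0 : (0:ℝ) ≤ T := hT.le
  -- continuity of p on [0,T]
  have hpc : ContinuousOn p (Icc 0 T) := by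
    have hprim : ContinuousOn (fun t => p 0 + ∫ s in (0:ℝ)..t, p' s) (Icc 0 T) := by
      apply ContinuousOn.add continuousOn_const
      have := intervalIntegral.continuousOn_primitive_interval
        (a := (0:ℝ)) (b := T) (μ := volume) (f := p') ?_
      · simpa [uIcc_of_le hT0] using this
      · rw [uIcc_of_le hT0, integrableOn_Icc_iff_integrableOn_Ioc]
        exact hp'.1
    exact hprim.congr (fun t ht => hp t ht)
  set x0 : ℝ := p 0 - max (-r) (min (p 0) r) with hx0
  have hcl : -r ≤ max (-r) (min (p 0) r) := le_max_left _ _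
  have hcr : max (-r) (min (p 0) r) ≤ r := max_le (by linarith) (min_le_right _ _)
  have hx0l : p 0 - r ≤ x0 := by rw [hx0]; linarith
  have hx0r : x0 ≤ p 0 + r := by rw [hx0]; linarith
  set xi : ℝ → ℝ := xiF T r p x0 with hxi
  -- measurable representative of |p'|
  have hsm := hp'.1.aestronglyMeasurable
  set q : ℝ → ℝ := hsm.mk p' with hq
  have hqmeas : StronglyMeasurable q := hsm.stronglyMeasurable_mk
  have hqae : p' =ᵐ[volume.restrict (Ioc 0 T)] q := hsm.ae_eq_mk
  set m : ℝ → ℝ := fun x => |q x| with hm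
  have hm0 : ∀ x, 0 ≤ m x := fun x => abs_nonneg _
  have hmmeas : Measurable m := hqmeas.measurable.abs
  have habsae : (fun x => |p' x|) =ᵐ[volume.restrict (Ioc 0 T)] m :=
    hqae.mono fun x hx => by rw [hm]; simp only; rw [hx]
  have hmint : IntegrableOn m (Icc 0 T) volume := by
    rw [integrableOn_Icc_iff_integrableOn_Ioc]
    exact hp'.abs.1.congr habsae
  have hmeq : ∀ s t : ℝ, 0 ≤ s → s ≤ t → t ≤ T →
      (∫ u in s..t, |p' u|) = ∫ u in s..t, m u := by
    intro s t hs hst ht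
    rw [intervalIntegral.integral_of_le hst, intervalIntegral.integral_of_le hst]
    exact integral_congr_ae
      (ae_restrict_of_ae_restrict_of_subset (Ioc_subset_Ioc hs ht) habsae)
  have hosc : ∀ s t : ℝ, 0 ≤ s → s ≤ t → t ≤ T →
      |xi t - xi s| ≤ ∫ u in s..t, m u := by
    intro s t hs hst ht
    rw [← hmeq s t hs hst ht]
    exact xiF_osc (x0 := x0) hT0 hr hpc hp' hp hs hst ht
  have hxc : ContinuousOn xi (Icc 0 T) := xiF_cont (x0 := x0) hT0 hr hpc hp' hp
  obtain ⟨δ, hδ, hpieces⟩ := xiF_pieces (x0 := x0) hT0 hr hpc hp' hp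
  obtain ⟨g, hgint, hgftc, hgae⟩ := glue_pieces hT0 hδ hxc hm0 hmmeas hmint hosc hpieces
  have hlow : ∀ t ∈ Icc 0 T, p t - r ≤ xi t := fun t ht => xiF_ge_lower hpc hr ht
  have hupp : ∀ t ∈ Icc 0 T, xi t ≤ p t + r := fun t ht => xiF_le_upper hpc ht
  have hxi0 : xi 0 = x0 := xiF_zero hpc hT0 hr hx0l hx0r
  have hgI : IntervalIntegrable g volume 0 T := by
    have : IntegrableOn g (uIcc 0 T) volume := by rw [uIcc_of_le hT0]; exact hgint
    exact this.intervalIntegrable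
  -- the variational inequality
  have hVI : ∀ᵐ t ∂(volume.restrict (Icc 0 T)),
      ∀ z ∈ Icc (-r) r, 0 ≤ g t * (p t - xi t - z) := by
    have hIoo : ∀ᵐ (t:ℝ) ∂volume, t ≠ 0 ∧ t ≠ T := by
      rw [ae_iff]
      have hsub : {t : ℝ | ¬(t ≠ 0 ∧ t ≠ T)} ⊆ {(0:ℝ)} ∪ {T} := by
        intro u hu
        simp only [mem_setOf_eq, not_and, not_not, ne_eq] at hu
        by_cases h : u = 0
        · exact Or.inl h
        · exact Or.inr (hu h)
      apply measure_mono_null hsub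
      exact measure_union_null (measure_singleton _) (measure_singleton _)
    filter_upwards [ae_restrict_mem measurableSet_Icc, ae_restrict_of_ae hIoo,
      ae_restrict_of_ae hgae] with t htmem htne hder
    have htIoo : t ∈ Ioo (0:ℝ) T :=
      ⟨lt_of_le_of_ne htmem.1 (Ne.symm htne.1), lt_of_le_of_ne htmem.2 htne.2⟩
    have hD : HasDerivAt xi (g t) t := hder htIoo
    have hslope := hasDerivAt_iff_tendsto_slope.1 hD
    have hright : Filter.Tendsto (slope xi t) (nhdsWithin t (Ioi t)) (nhds (g t)) :=
      hslope.mono_left (nhdsWithin_mono _ (fun u hu => ne_of_gt hu))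
    have hgle : p t - r < xi t → g t ≤ 0 := by
      intro hstrict
      obtain ⟨δ', hδ', hwin⟩ :=
        xiF_loc_noninc (x0 := x0) hT0 hr hpc hp' hp htmem hstrict
      apply le_of_tendsto hright
      have hmm : Ioo t (min (t + δ') T) ∈ nhdsWithin t (Ioi t) :=
        Ioo_mem_nhdsGT_of_mem ⟨le_rfl, lt_min (by linarith) htIoo.2⟩
      filter_upwards [hmm] with u hu
      have huT : u ∈ Icc 0 T := ⟨htmem.1.trans hu.1.le, hu.2.le.trans (min_le_right _ _)⟩
      have hxu : xi u ≤ xi t :=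
        hwin t u htmem huT (by linarith) hu.1.le
          (by linarith [hu.2.le.trans (min_le_left _ _)])
      rw [slope_def_field]
      exact div_nonpos_iff.2 (Or.inr ⟨by linarith, by linarith [hu.1]⟩)
    have hgge : xi t < p t + r → 0 ≤ g t := by
      intro hstrict
      obtain ⟨δ', hδ', hwin⟩ :=
        xiF_loc_nondec (x0 := x0) hT0 hr hpc hp' hp htmem hstrict
      apply ge_of_tendsto hright
      have hmm : Ioo t (min (t + δ') T) ∈ nhdsWithin t (Ioi t) :=
        Ioo_mem_nhdsGT_of_mem ⟨le_rfl, lt_min (by linarith) htIoo.2⟩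
      filter_upwards [hmm] with u hu
      have huT : u ∈ Icc 0 T := ⟨htmem.1.trans hu.1.le, hu.2.le.trans (min_le_right _ _)⟩
      have hxu : xi t ≤ xi u :=
        hwin t u htmem huT (by linarith) hu.1.le
          (by linarith [hu.2.le.trans (min_le_left _ _)])
      rw [slope_def_field]
      exact div_nonneg (by linarith) (by linarith [hu.1])
    intro z hz
    rcases lt_or_ge (p t - xi t) r with h1 | h1
    · rcases lt_or_ge (-r) (p t - xi t) with h2 | h2
      · have e1 : g t ≤ 0 := hgle (by linarith)
        have e2 : 0 ≤ g t := hgge (by linarith)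
        have : g t = 0 := le_antisymm e1 e2
        rw [this]; simp
      · have hge : -r ≤ p t - xi t := by linarith [hupp t htmem]
        have hxt : p t - xi t = -r := le_antisymm h2 hge
        have e1 : g t ≤ 0 := hgle (by linarith)
        have hnn : p t - xi t - z ≤ 0 := by rw [hxt]; linarith [hz.1]
        have := mul_nonneg (neg_nonneg.2 e1) (neg_nonneg.2 hnn)
        nlinarith [this]
    · have hle' : p t - xi t ≤ r := by linarith [hlow t htmem]
      have hxt : p t - xi t = r := le_antisymm hle' h1
      have e2 : 0 ≤ g t := hgge (by linarith)
      have hnn : 0 ≤ p t - xi t - z := by rw [hxt]; linarith [hz.2]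
      exact mul_nonneg e2 hnn
  refine ⟨xi, g, ⟨hgI, hgftc, ?_, hVI, ?_⟩, ?_⟩
  · intro t ht
    rw [abs_le]
    exact ⟨by linarith [hupp t ht], by linarith [hlow t ht]⟩
  · rw [hxi0, hx0]; ring
  -- uniqueness
  · intro η η' hη
    obtain ⟨hη'i, hηftc, hηcon, hηVI, hηinit⟩ := hη
    have hη0 : η 0 = xi 0 := by rw [hxi0, hx0]; linarith
    intro t ht
    set gd : ℝ → ℝ := fun u => g u - η' u with hgd
    have hgdT : IntervalIntegrable gd volume 0 T := hgI.sub hη'i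
    have hsubi : ∀ s : ℝ, s ∈ Icc 0 T → IntervalIntegrable gd volume 0 s := by
      intro s hs
      apply hgdT.mono_set
      rw [uIcc_of_le hs.1, uIcc_of_le hT0]
      exact Icc_subset_Icc le_rfl hs.2
    have hGs : ∀ s ∈ Icc 0 T, (∫ u in (0:ℝ)..s, gd u) = xi s - η s := by
      intro s hs
      have hgs : IntervalIntegrable g volume 0 s := by
        apply hgI.mono_set
        rw [uIcc_of_le hs.1, uIcc_of_le hT0]
        exact Icc_subset_Icc le_rfl hs.2
      have hηs : IntervalIntegrable η' volume 0 s := by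
        apply hη'i.mono_set
        rw [uIcc_of_le hs.1, uIcc_of_le hT0]
        exact Icc_subset_Icc le_rfl hs.2
      rw [hgd]
      rw [intervalIntegral.integral_sub hgs hηs]
      have h1 := hgftc s hs
      have h2 := hηftc s hs
      have h3 : xi s = xi 0 + ∫ u in (0:ℝ)..s, g u := h1
      linarith
    have hsq := square_identity ht.1 (hsubi t ht)
    have hsign : ∀ᵐ s ∂(volume.restrict (Icc 0 t)),
        0 ≤ -(gd s * ∫ u in (0:ℝ)..(max 0 (min s t)), gd u) := by
      have hVIxi' := ae_restrict_of_ae_restrict_of_subset (Icc_subset_Icc le_rfl ht.2) hVI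
      have hVIeta' := ae_restrict_of_ae_restrict_of_subset (Icc_subset_Icc le_rfl ht.2) hηVI
      filter_upwards [hVIxi', hVIeta', ae_restrict_mem measurableSet_Icc]
        with s h1 h2 hmem
      have hsT : s ∈ Icc 0 T := ⟨hmem.1, hmem.2.trans ht.2⟩
      have hcl2 : max 0 (min t s) = s := clamp_eq hmem
      rw [min_comm] at hcl2
      rw [hcl2, hGs s hsT]
      have hz1 : p s - η s ∈ Icc (-r) r := by
        have := abs_le.1 (hηcon s hsT)
        exact ⟨this.1, this.2⟩
      have hz2 : p s - xi s ∈ Icc (-r) r := by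
        constructor
        · linarith [hupp s hsT]
        · linarith [hlow s hsT]
      have k1 := h1 (p s - η s) hz1
      have k2 := h2 (p s - xi s) hz2
      have hgds : gd s = g s - η' s := rfl
      rw [hgds]
      nlinarith [k1, k2]
    have hle2 : (∫ s in (0:ℝ)..t, gd s * ∫ u in (0:ℝ)..(max 0 (min s t)), gd u) ≤ 0 := by
      have hnn := intervalIntegral.integral_nonneg_of_ae_restrict (μ := volume) ht.1 hsign
      rw [intervalIntegral.integral_neg] at hnn
      linarith
    have hfin : (xi t - η t)^2 ≤ 0 := by
      rw [← hGs t ht, hsq]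
      linarith
    have heq : (xi t - η t)^2 = 0 := le_antisymm hfin (sq_nonneg _)
    have : xi t - η t = 0 := by
      exact pow_eq_zero_iff (by norm_num) |>.1 heq
    linarith
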